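/- Let Z = (Z_1, …, Z_n) be uniformly distributed on the unit sphere of ℂⁿ. If p ≠ q then for any indices, E[ Z_{i_1}⋯Z_{i_p} · conj(Z_{j_1})⋯conj(Z_{j_q}) ] = 0. Moreover, for any k ≥ 1 and any indices i_1, …, i_k, j_1, …, j_k ∈ {1, …, n}, E[ Z_{i_1}⋯Z_{i_k} · conj(Z_{j_1})⋯conj(Z_{j_k}) ] = (1 / (n(n+1)⋯(n+k−1))) · Σ_{π ∈ S_k} δ_{i_1 j_{π(1)}} ⋯ δ_{i_k j_{π(k)}}, where the sum is over all permutations π of {1, …, k}. -/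

import Mathlib

set_option linter.unusedSectionVars false

open MeasureTheory ProbabilityTheory Matrix
open scoped Matrix ComplexConjugate Nat

section Aux
variable {n : ℕ} {Ω : Type*} [MeasurableSpace Ω] (P : Measure Ω) [IsProbabilityMeasure P]
  (Z : Ω → Fin n → ℂ)

-- coordinates bounded by 1
lemma zbdd (hZsph : ∀ ω, ∑ j, Complex.normSq (Z ω j) = 1) (ω : Ω) (m : Fin n) :
    ‖Z ω m‖ ≤ 1 := by
  have h1 : Complex.normSq (Z ω m) ≤ 1 := by
    rw [← hZsph ω]
    exact Finset.single_le_sum (f := fun j => Complex.normSq (Z ω j))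
      (fun j _ => Complex.normSq_nonneg _) (Finset.mem_univ m)
  have := Complex.sq_norm (Z ω m)
  nlinarith [norm_nonneg (Z ω m)]

-- generic integrability
lemma int_bdd (hZmeas : Measurable Z) (hZsph : ∀ ω, ∑ j, Complex.normSq (Z ω j) = 1)
    (h : (Fin n → ℂ) → ℂ) (hh : Measurable h) (C : ℝ)
    (hC : ∀ z : Fin n → ℂ, (∀ m, ‖z m‖ ≤ 1) → ‖h z‖ ≤ C) :
    Integrable (fun ω => h (Z ω)) P := by
  refine Integrable.mono' (integrable_const C) ((hh.comp hZmeas).aestronglyMeasurable) ?_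
  filter_upwards with ω
  simpa using hC (Z ω) (fun m => zbdd Z hZsph ω m)

-- invariance of integrals
lemma inv_int (hZmeas : Measurable Z)
    (hZunif : ∀ V ∈ Matrix.unitaryGroup (Fin n) ℂ,
      Measure.map (fun ω => Matrix.mulVec V (Z ω)) P = Measure.map Z P)
    (V : Matrix (Fin n) (Fin n) ℂ) (hV : V ∈ Matrix.unitaryGroup (Fin n) ℂ)
    (h : (Fin n → ℂ) → ℂ) (hh : Measurable h) :
    ∫ ω, h (V.mulVec (Z ω)) ∂P = ∫ ω, h (Z ω) ∂P := by
  have hmv : Measurable fun z : Fin n → ℂ => V.mulVec z := by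
    apply measurable_pi_lambda
    intro r
    simp only [Matrix.mulVec, dotProduct]
    exact Finset.measurable_sum _ (fun j _ => (measurable_pi_apply j).const_mul _)
  have hcomp : AEMeasurable (fun ω => V.mulVec (Z ω)) P := (hmv.comp hZmeas).aemeasurable
  have h1 : ∫ ω, h (V.mulVec (Z ω)) ∂P = ∫ z, h z ∂(Measure.map (fun ω => V.mulVec (Z ω)) P) :=
    (integral_map hcomp hh.aestronglyMeasurable).symm
  have h2 : ∫ ω, h (Z ω) ∂P = ∫ z, h z ∂(Measure.map Z P) :=
    (integral_map hZmeas.aemeasurable hh.aestronglyMeasurable).symm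
  rw [h1, h2, hZunif V hV]

end Aux

section Jmom
variable {n : ℕ} {Ω : Type*} [MeasurableSpace Ω] (P : Measure Ω) [IsProbabilityMeasure P]
  (Z : Ω → Fin n → ℂ)

/-- The monomial function. -/
noncomputable def gfun (E F : Fin n → ℕ) : (Fin n → ℂ) → ℂ :=
  fun z => (∏ m, z m ^ E m) * ∏ m, (conj (z m)) ^ F m

lemma gfun_meas (E F : Fin n → ℕ) : Measurable (gfun E F) := by
  apply Measurable.mul
  · exact Finset.measurable_prod _ (fun m _ => (measurable_pi_apply m).pow_const _)
  · exact Finset.measurable_prod _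
      (fun m _ => (Complex.continuous_conj.measurable.comp (measurable_pi_apply m)).pow_const _)

lemma gfun_bdd (E F : Fin n → ℕ) (z : Fin n → ℂ) (hz : ∀ m, ‖z m‖ ≤ 1) :
    ‖gfun E F z‖ ≤ 1 := by
  unfold gfun
  rw [norm_mul, norm_prod, norm_prod]
  have h1 : ∀ (G : Fin n → ℕ) (w : Fin n → ℂ), (∀ m, ‖w m‖ ≤ 1) →
      (∏ m, ‖w m ^ G m‖) ≤ 1 := by
    intro G w hw
    apply Finset.prod_le_one
    · intro m _; positivity
    · intro m _; rw [norm_pow]; exact pow_le_one₀ (norm_nonneg _) (hw m)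
  have := h1 E z hz
  have h2 := h1 F (fun m => conj (z m)) (by intro m; simpa using hz m)
  calc (∏ m, ‖z m ^ E m‖) * ∏ m, ‖(conj (z m)) ^ F m‖
      ≤ 1 * 1 := by
        apply mul_le_mul this h2 _ zero_le_one
        apply Finset.prod_nonneg; intro m _; positivity
    _ = 1 := by ring

/-- The moment `E[∏ Z^E ∏ conj Z^F]`. -/
noncomputable def Jmom (E F : Fin n → ℕ) : ℂ := ∫ ω, gfun E F (Z ω) ∂P

lemma Jmom_int (hZmeas : Measurable Z) (hZsph : ∀ ω, ∑ j, Complex.normSq (Z ω j) = 1)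
    (E F : Fin n → ℕ) : Integrable (fun ω => gfun E F (Z ω)) P :=
  int_bdd P Z hZmeas hZsph _ (gfun_meas E F) 1 (gfun_bdd E F)

/-- Lemma A: unbalanced exponent moments vanish. -/
lemma Jmom_zero (hZmeas : Measurable Z) (hZsph : ∀ ω, ∑ j, Complex.normSq (Z ω j) = 1)
    (hZunif : ∀ V ∈ Matrix.unitaryGroup (Fin n) ℂ,
      Measure.map (fun ω => Matrix.mulVec V (Z ω)) P = Measure.map Z P)
    (E F : Fin n → ℕ) (m₀ : Fin n) (hne : E m₀ ≠ F m₀) :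
    Jmom P Z E F = 0 := by
  set d : ℤ := (E m₀ : ℤ) - (F m₀ : ℤ) with hd_def
  have hd : d ≠ 0 := by omega
  have hdC : (d : ℂ) ≠ 0 := Int.cast_ne_zero.mpr hd
  set e : ℂ := Complex.exp (Real.pi * Complex.I / d) with he_def
  have hconj : conj e = Complex.exp (-(Real.pi * Complex.I / d)) := by
    rw [he_def, ← Complex.exp_conj]
    congr 1
    simp [map_div₀]
    ring
  have hee : conj e * e = 1 := by
    rw [hconj, he_def, ← Complex.exp_add]
    simp
  have hee' : e * conj e = 1 := by rw [mul_comm]; exact hee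
  -- the diagonal phase matrix
  set D : Matrix (Fin n) (Fin n) ℂ := Matrix.diagonal (fun r => if r = m₀ then e else 1) with hD_def
  have hDU : D ∈ Matrix.unitaryGroup (Fin n) ℂ := by
    rw [Matrix.mem_unitaryGroup_iff]
    rw [hD_def]
    rw [Matrix.star_eq_conjTranspose, Matrix.diagonal_conjTranspose, Matrix.diagonal_mul_diagonal]
    ext i j
    rcases eq_or_ne i j with rfl | hij
    · by_cases h : i = m₀ <;> simp [Matrix.diagonal_apply, Matrix.one_apply, h, hee']
    · simp [Matrix.diagonal_apply, hij, Matrix.one_apply]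
  have hmv : ∀ z : Fin n → ℂ, D.mulVec z = fun r => (if r = m₀ then e else 1) * z r := by
    intro z; funext r; rw [hD_def, Matrix.mulVec_diagonal]
  -- transformation of gfun
  have hg : ∀ z : Fin n → ℂ, gfun E F (D.mulVec z) = e ^ E m₀ * (conj e) ^ F m₀ * gfun E F z := by
    intro z
    rw [hmv z]
    unfold gfun
    have h1 : (∏ m, ((if m = m₀ then e else 1) * z m) ^ E m)
        = e ^ E m₀ * ∏ m, z m ^ E m := by
      rw [show (∏ m, ((if m = m₀ then e else 1) * z m) ^ E m)
          = (∏ m, (if m = m₀ then e ^ E m else 1)) * ∏ m, z m ^ E m by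
        rw [← Finset.prod_mul_distrib]
        apply Finset.prod_congr rfl
        intro m _
        by_cases h : m = m₀ <;> simp [h, mul_pow]]
      congr 1
      simp [Finset.prod_ite_eq']
    have h2 : (∏ m, (conj ((if m = m₀ then e else 1) * z m)) ^ F m)
        = (conj e) ^ F m₀ * ∏ m, (conj (z m)) ^ F m := by
      rw [show (∏ m, (conj ((if m = m₀ then e else 1) * z m)) ^ F m)
          = (∏ m, (if m = m₀ then (conj e) ^ F m else 1)) * ∏ m, (conj (z m)) ^ F m by
        rw [← Finset.prod_mul_distrib]
        apply Finset.prod_congr rfl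
        intro m _
        by_cases h : m = m₀ <;> simp [h, mul_pow]]
      congr 1
      simp [Finset.prod_ite_eq']
    rw [h1, h2]; ring
  -- invariance
  have hinv := inv_int P Z hZmeas hZunif D hDU (gfun E F) (gfun_meas E F)
  have hJ : Jmom P Z E F = e ^ E m₀ * (conj e) ^ F m₀ * Jmom P Z E F := by
    unfold Jmom
    calc ∫ ω, gfun E F (Z ω) ∂P = ∫ ω, gfun E F (D.mulVec (Z ω)) ∂P := hinv.symm
      _ = ∫ ω, e ^ E m₀ * (conj e) ^ F m₀ * gfun E F (Z ω) ∂P := by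
          apply integral_congr_ae; filter_upwards with ω; exact hg (Z ω)
      _ = e ^ E m₀ * (conj e) ^ F m₀ * ∫ ω, gfun E F (Z ω) ∂P := integral_const_mul _ _
  -- the phase factor is -1
  have hphase : e ^ E m₀ * (conj e) ^ F m₀ = -1 := by
    rw [he_def, hconj, ← Complex.exp_nat_mul, ← Complex.exp_nat_mul, ← Complex.exp_add]
    rw [show (E m₀ : ℂ) * (Real.pi * Complex.I / d) + (F m₀ : ℂ) * -(Real.pi * Complex.I / d)
        = ((E m₀ : ℂ) - (F m₀ : ℂ)) * (Real.pi * Complex.I) / d by ring]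
    rw [show ((E m₀ : ℂ) - (F m₀ : ℂ)) = (d : ℂ) by rw [hd_def]; push_cast; ring]
    rw [mul_comm (d:ℂ) _, mul_div_assoc, div_self hdC, mul_one, Complex.exp_pi_mul_I]
  rw [hphase] at hJ
  have : (2:ℂ) * Jmom P Z E F = 0 := by linear_combination hJ
  simpa using this

end Jmom

section Rec
variable {n : ℕ} {Ω : Type*} [MeasurableSpace Ω] (P : Measure Ω) [IsProbabilityMeasure P]
  (Z : Ω → Fin n → ℂ)

/-- increment an exponent vector at one coordinate -/
def incE (m : Fin n) (f : Fin n → ℕ) : Fin n → ℕ := Function.update f m (f m + 1)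

lemma prod_incE (m : Fin n) (f : Fin n → ℕ) (z : Fin n → ℂ) :
    (∏ r, z r ^ (incE m f r)) = z m * ∏ r, z r ^ f r := by
  have h : (fun r => z r ^ (incE m f r)) = Function.update (fun r => z r ^ f r) m (z m ^ (f m + 1)) := by
    funext r
    by_cases h : r = m
    · subst h; simp [incE]
    · simp [incE, Function.update_of_ne h]
  rw [h, Finset.prod_update_of_mem (Finset.mem_univ m),
    ← Finset.mul_prod_erase Finset.univ (fun r => z r ^ f r) (Finset.mem_univ m), pow_succ]
  rw [show (Finset.univ : Finset (Fin n)) \ {m} = Finset.univ.erase m by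
    rw [Finset.erase_eq]]
  ring

lemma gfun_incE (m : Fin n) (a b : Fin n → ℕ) (z : Fin n → ℂ) :
    gfun (incE m a) (incE m b) z = (z m * conj (z m)) * gfun a b z := by
  unfold gfun
  rw [prod_incE]
  rw [show (∏ r, (conj (z r)) ^ (incE m b r)) = conj (z m) * ∏ r, (conj (z r)) ^ b r from
    prod_incE m b (fun r => conj (z r))]
  ring

/-- P2 : the sphere recursion -/
lemma Jmom_rec (hZmeas : Measurable Z) (hZsph : ∀ ω, ∑ j, Complex.normSq (Z ω j) = 1)
    (a : Fin n → ℕ) :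
    ∑ m, Jmom P Z (incE m a) (incE m a) = Jmom P Z a a := by
  unfold Jmom
  rw [← integral_finset_sum _ (fun m _ => Jmom_int P Z hZmeas hZsph (incE m a) (incE m a))]
  apply integral_congr_ae
  filter_upwards with ω
  have : ∑ m, gfun (incE m a) (incE m a) (Z ω) = (∑ m, Z ω m * conj (Z ω m)) * gfun a a (Z ω) := by
    rw [Finset.sum_mul]
    exact Finset.sum_congr rfl (fun m _ => gfun_incE m a a (Z ω))
  rw [this]
  have hs : (∑ m, Z ω m * conj (Z ω m)) = 1 := by
    have := hZsph ω
    calc (∑ m, Z ω m * conj (Z ω m)) = ∑ m, (Complex.normSq (Z ω m) : ℂ) := by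
          apply Finset.sum_congr rfl; intro m _; rw [Complex.mul_conj]
      _ = ((∑ m, Complex.normSq (Z ω m) : ℝ) : ℂ) := by push_cast; ring
      _ = 1 := by rw [this]; norm_num
  rw [hs, one_mul]

end Rec

section Rot
variable {n : ℕ}

/-- rotation matrix in the (p,q) plane -/
noncomputable def rotM (p q : Fin n) (c s : ℝ) : Matrix (Fin n) (Fin n) ℂ :=
  Matrix.diagonal (fun r => if r = p ∨ r = q then (c : ℂ) else 1) +
    (s : ℂ) • (Matrix.single p q 1 - Matrix.single q p 1)

lemma stdBasis_conjT (p q : Fin n) :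
    (Matrix.single p q (1:ℂ))ᴴ = Matrix.single q p 1 := by
  ext i j
  simp only [Matrix.conjTranspose_apply, Matrix.single, Matrix.of_apply]
  by_cases h1 : p = j <;> by_cases h2 : q = i <;> simp [h1, h2, and_comm]

lemma sbm_ne {p q i j : Fin n} (x : ℂ) (h : ¬(p = i ∧ q = j)) :
    Matrix.single p q x i j = 0 :=
  Matrix.single_apply_of_ne _ _ _ _ _ h

lemma sbm_same (p : Fin n) (x : ℂ) : Matrix.single p p x p p = x :=
  Matrix.single_apply_same _ _ _

lemma rotM_unitary (p q : Fin n) (hpq : p ≠ q) (c s : ℝ) (hcs : c^2 + s^2 = 1) :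
    rotM p q c s ∈ Matrix.unitaryGroup (Fin n) ℂ := by
  classical
  set dvec : Fin n → ℂ := fun r => if r = p ∨ r = q then (c : ℂ) else 1 with hdvec
  set Dm : Matrix (Fin n) (Fin n) ℂ := Matrix.diagonal dvec with hDm
  set K : Matrix (Fin n) (Fin n) ℂ :=
    Matrix.single p q 1 - Matrix.single q p 1 with hK
  have hstar : star (rotM p q c s) = Dm - (s:ℂ) • K := by
    rw [Matrix.star_eq_conjTranspose]
    unfold rotM
    rw [Matrix.conjTranspose_add, Matrix.conjTranspose_smul, Matrix.diagonal_conjTranspose,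
      Matrix.conjTranspose_sub, stdBasis_conjT, stdBasis_conjT]
    have h1 : (star (fun r => if r = p ∨ r = q then (c : ℂ) else 1) : Fin n → ℂ) = dvec := by
      funext r
      by_cases h : r = p ∨ r = q <;> simp [h, hdvec, Complex.conj_ofReal]
    have h2 : (star ((s:ℂ)) : ℂ) = (s:ℂ) := by simp [Complex.conj_ofReal]
    rw [h1, h2, hDm, hK]
    rw [smul_sub, smul_sub]
    abel
  have hDK : Dm * K = (c:ℂ) • K := by
    ext i j
    rw [Matrix.smul_apply]
    rw [show (Dm * K) i j = dvec i * K i j from Matrix.diagonal_mul dvec K i j]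
    by_cases h : i = p ∨ i = q
    · simp [hdvec, h, Matrix.smul_apply]
    · push_neg at h
      have e1 : Matrix.single p q (1:ℂ) i j = 0 :=
        Matrix.single_apply_of_ne _ _ _ _ _ (by tauto)
      have e2 : Matrix.single q p (1:ℂ) i j = 0 :=
        Matrix.single_apply_of_ne _ _ _ _ _ (by tauto)
      have : K i j = 0 := by rw [hK]; simp [Matrix.sub_apply, e1, e2]
      simp [this]
  have hKD : K * Dm = (c:ℂ) • K := by
    ext i j
    rw [Matrix.smul_apply]
    rw [show (K * Dm) i j = K i j * dvec j from Matrix.mul_diagonal dvec K i j]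
    by_cases h : j = p ∨ j = q
    · simp [hdvec, h, Matrix.smul_apply]; ring
    · push_neg at h
      have e1 : Matrix.single p q (1:ℂ) i j = 0 :=
        Matrix.single_apply_of_ne _ _ _ _ _ (by tauto)
      have e2 : Matrix.single q p (1:ℂ) i j = 0 :=
        Matrix.single_apply_of_ne _ _ _ _ _ (by tauto)
      have : K i j = 0 := by rw [hK]; simp [Matrix.sub_apply, e1, e2]
      simp [this]
  have hKK : K * K = -(Matrix.single p p 1 + Matrix.single q q 1) := by
    rw [hK, sub_mul, mul_sub, mul_sub]
    rw [Matrix.single_mul_single_same, Matrix.single_mul_single_same,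
      Matrix.single_mul_single_of_ne (h := Ne.symm hpq), Matrix.single_mul_single_of_ne (h := hpq)]
    simp only [one_mul]
    abel
  rw [Matrix.mem_unitaryGroup_iff, hstar]
  have expand : rotM p q c s * (Dm - (s:ℂ) • K)
      = Dm * Dm - (s:ℂ) • (Dm * K) + ((s:ℂ) • (K * Dm) - ((s:ℂ) * (s:ℂ)) • (K * K)) := by
    unfold rotM
    rw [← hdvec, ← hDm, ← hK]
    rw [add_mul, mul_sub, mul_sub, Matrix.smul_mul, Matrix.smul_mul, Matrix.mul_smul,
      Matrix.mul_smul, smul_smul]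
  rw [expand, hDK, hKD, hKK]
  rw [smul_smul]
  have : Dm * Dm = Matrix.diagonal (fun r => dvec r * dvec r) := Matrix.diagonal_mul_diagonal _ _
  rw [this]
  have hc2 : (c:ℂ) * (c:ℂ) + (s:ℂ) * (s:ℂ) = 1 := by
    rw [show ((c:ℂ) * (c:ℂ) + (s:ℂ) * (s:ℂ)) = ((c^2 + s^2 : ℝ) : ℂ) by push_cast; ring, hcs]
    norm_num
  ext i j
  rcases eq_or_ne i j with rfl | hij
  · by_cases h : i = p
    · subst h
      have e2 : ∀ x : ℂ, Matrix.single q q x i i = 0 := fun x => sbm_ne x (by tauto)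
      simp [Matrix.diagonal_apply_eq, hdvec, Matrix.one_apply, e2, sbm_same]
      linear_combination hc2
    · by_cases h2 : i = q
      · subst h2
        have e2 : ∀ x : ℂ, Matrix.single p p x i i = 0 := fun x => sbm_ne x (by tauto)
        simp [Matrix.diagonal_apply_eq, hdvec, Matrix.one_apply, e2, h, sbm_same]
        linear_combination hc2
      · have e1 : ∀ x : ℂ, Matrix.single p p x i i = 0 := fun x => sbm_ne x (by tauto)
        have e2 : ∀ x : ℂ, Matrix.single q q x i i = 0 := fun x => sbm_ne x (by tauto)
        simp [Matrix.diagonal_apply_eq, hdvec, h, h2, Matrix.one_apply, e1, e2]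
  · have e1 : ∀ x : ℂ, Matrix.single p p x i j = 0 :=
      fun x => sbm_ne x (by rintro ⟨rfl, rfl⟩; exact hij rfl)
    have e2 : ∀ x : ℂ, Matrix.single q q x i j = 0 :=
      fun x => sbm_ne x (by rintro ⟨rfl, rfl⟩; exact hij rfl)
    simp [Matrix.diagonal_apply_ne _ hij, Matrix.one_apply, hij, e1, e2]

lemma rotM_mulVec (p q : Fin n) (hpq : p ≠ q) (c s : ℝ) (z : Fin n → ℂ) :
    (rotM p q c s).mulVec z = fun r =>
      if r = p then (c:ℂ) * z p + (s:ℂ) * z q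
      else if r = q then (c:ℂ) * z q - (s:ℂ) * z p else z r := by
  funext r
  unfold rotM
  rw [Matrix.add_mulVec, Matrix.smul_mulVec, Matrix.sub_mulVec]
  simp only [Pi.add_apply, Pi.smul_apply, Pi.sub_apply, Matrix.mulVec_diagonal,
    Matrix.single_mulVec, one_mul, smul_eq_mul]
  by_cases h : r = p
  · subst h
    rw [Function.update_self, Function.update_of_ne hpq]
    simp [hpq]
    try ring
  · by_cases h2 : r = q
    · subst h2
      rw [Function.update_of_ne h, Function.update_self]
      simp [h, Pi.zero_apply]
      try ring
    · rw [Function.update_of_ne h, Function.update_of_ne h2]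
      simp [h, h2]

end Rot

section UpdProd
variable {n : ℕ}

lemma prod_pow_update (f : Fin n → ℕ) (m : Fin n) (v : ℕ) (z : Fin n → ℂ) (hm : f m = 0) :
    (∏ r, z r ^ (Function.update f m v r)) = z m ^ v * ∏ r, z r ^ f r := by
  have h : (fun r => z r ^ (Function.update f m v r))
      = Function.update (fun r => z r ^ f r) m (z m ^ v) := by
    funext r
    by_cases hr : r = m
    · subst hr; simp
    · simp [Function.update_of_ne hr]
  rw [h, Finset.prod_update_of_mem (Finset.mem_univ m),
    ← Finset.mul_prod_erase Finset.univ (fun r => z r ^ f r) (Finset.mem_univ m), hm, pow_zero,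
    one_mul, Finset.erase_eq]

/-- exponent vector with values u,v at p,q and a' elsewhere -/
def updPQ (p q : Fin n) (a' : Fin n → ℕ) (u v : ℕ) : Fin n → ℕ :=
  Function.update (Function.update a' p u) q v

lemma updPQ_p {p q : Fin n} (hpq : p ≠ q) (a' : Fin n → ℕ) (u v : ℕ) :
    updPQ p q a' u v p = u := by
  unfold updPQ
  rw [Function.update_of_ne hpq, Function.update_self]

lemma updPQ_q {p q : Fin n} (a' : Fin n → ℕ) (u v : ℕ) : updPQ p q a' u v q = v := by
  unfold updPQ; rw [Function.update_self]

lemma gfun_updPQ {p q : Fin n} (hpq : p ≠ q) (a' : Fin n → ℕ)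
    (ha'p : a' p = 0) (ha'q : a' q = 0) (e1 e2 e3 e4 : ℕ) (z : Fin n → ℂ) :
    gfun (updPQ p q a' e1 e3) (updPQ p q a' e2 e4) z
      = (z p ^ e1 * (conj (z p)) ^ e2) * (z q ^ e3 * (conj (z q)) ^ e4) * gfun a' a' z := by
  unfold gfun updPQ
  have hq1 : (Function.update a' p e1) q = 0 := by rw [Function.update_of_ne (Ne.symm hpq)]; exact ha'q
  have hq2 : (Function.update a' p e2) q = 0 := by rw [Function.update_of_ne (Ne.symm hpq)]; exact ha'q
  rw [prod_pow_update _ q e3 z hq1, prod_pow_update a' p e1 z ha'p,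
    prod_pow_update _ q e4 _ hq2, prod_pow_update a' p e2 _ ha'p]
  ring

end UpdProd

section DerivDefs
variable {n : ℕ} {Ω : Type*}

noncomputable def wF (Z : Ω → Fin n → ℂ) (p q : Fin n) (θ : ℝ) (ω : Ω) : ℂ :=
  (Real.cos θ : ℂ) * Z ω p + (Real.sin θ : ℂ) * Z ω q

noncomputable def vF (Z : Ω → Fin n → ℂ) (p q : Fin n) (θ : ℝ) (ω : Ω) : ℂ :=
  (Real.cos θ : ℂ) * Z ω q - (Real.sin θ : ℂ) * Z ω p

noncomputable def wbF (Z : Ω → Fin n → ℂ) (p q : Fin n) (θ : ℝ) (ω : Ω) : ℂ :=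
  (Real.cos θ : ℂ) * conj (Z ω p) + (Real.sin θ : ℂ) * conj (Z ω q)

noncomputable def vbF (Z : Ω → Fin n → ℂ) (p q : Fin n) (θ : ℝ) (ω : Ω) : ℂ :=
  (Real.cos θ : ℂ) * conj (Z ω q) - (Real.sin θ : ℂ) * conj (Z ω p)

lemma hasDerivAt_pow_comp {f : ℝ → ℂ} {f' : ℂ} {x : ℝ} (h : HasDerivAt f f' x) (A : ℕ) :
    HasDerivAt (fun t => f t ^ A) ((A : ℂ) * f x ^ (A - 1) * f') x := by
  induction A with
  | zero => simpa using hasDerivAt_const x (1 : ℂ)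
  | succ k ih =>
    have h2 : HasDerivAt (fun t => f t ^ k * f t)
        (((k : ℂ) * f x ^ (k - 1) * f') * f x + f x ^ k * f') x := ih.mul h
    have h3 : (fun t => f t ^ k * f t) = fun t => f t ^ (k + 1) := by
      funext t; rw [pow_succ]
    rw [h3] at h2
    convert h2 using 1
    rcases k with _ | k2
    · simp
    · push_cast
      ring

lemma wbF_eq (Z : Ω → Fin n → ℂ) (p q : Fin n) (θ : ℝ) (ω : Ω) :
    wbF Z p q θ ω = conj (wF Z p q θ ω) := by
  unfold wF wbF
  rw [map_add, _root_.map_mul, _root_.map_mul, Complex.conj_ofReal, Complex.conj_ofReal]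

lemma vbF_eq (Z : Ω → Fin n → ℂ) (p q : Fin n) (θ : ℝ) (ω : Ω) :
    vbF Z p q θ ω = conj (vF Z p q θ ω) := by
  unfold vF vbF
  rw [map_sub, _root_.map_mul, _root_.map_mul, Complex.conj_ofReal, Complex.conj_ofReal]

/-- the observable whose expectation is zero for all θ -/
noncomputable def PsiF (Z : Ω → Fin n → ℂ) (p q : Fin n) (a' : Fin n → ℕ) (A B : ℕ)
    (θ : ℝ) (ω : Ω) : ℂ :=
  (vF Z p q θ ω * wbF Z p q θ ω + wF Z p q θ ω * vbF Z p q θ ω) *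
    (wF Z p q θ ω ^ A * wbF Z p q θ ω ^ A) *
    (vF Z p q θ ω ^ B * vbF Z p q θ ω ^ B) * gfun a' a' (Z ω)

/-- its θ-derivative -/
noncomputable def PsiF' (Z : Ω → Fin n → ℂ) (p q : Fin n) (a' : Fin n → ℕ) (A B : ℕ)
    (θ : ℝ) (ω : Ω) : ℂ :=
  (((-(wF Z p q θ ω) * wbF Z p q θ ω + vF Z p q θ ω * vbF Z p q θ ω) +
      (vF Z p q θ ω * vbF Z p q θ ω + wF Z p q θ ω * -(wbF Z p q θ ω))) *
        (wF Z p q θ ω ^ A * wbF Z p q θ ω ^ A) *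
        (vF Z p q θ ω ^ B * vbF Z p q θ ω ^ B)
    + (vF Z p q θ ω * wbF Z p q θ ω + wF Z p q θ ω * vbF Z p q θ ω) *
        (((A : ℂ) * wF Z p q θ ω ^ (A - 1) * vF Z p q θ ω) * wbF Z p q θ ω ^ A
          + wF Z p q θ ω ^ A * ((A : ℂ) * wbF Z p q θ ω ^ (A - 1) * vbF Z p q θ ω)) *
        (vF Z p q θ ω ^ B * vbF Z p q θ ω ^ B)
    + (vF Z p q θ ω * wbF Z p q θ ω + wF Z p q θ ω * vbF Z p q θ ω) *
        (wF Z p q θ ω ^ A * wbF Z p q θ ω ^ A) *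
        (((B : ℂ) * vF Z p q θ ω ^ (B - 1) * (-(wF Z p q θ ω))) * vbF Z p q θ ω ^ B
          + vF Z p q θ ω ^ B * ((B : ℂ) * vbF Z p q θ ω ^ (B - 1) * (-(wbF Z p q θ ω)))))
    * gfun a' a' (Z ω)

lemma hasDerivAt_PsiF (Z : Ω → Fin n → ℂ) (p q : Fin n) (a' : Fin n → ℕ) (A B : ℕ)
    (θ : ℝ) (ω : Ω) :
    HasDerivAt (fun t => PsiF Z p q a' A B t ω) (PsiF' Z p q a' A B θ ω) θ := by
  have hw : HasDerivAt (fun t => wF Z p q t ω) (vF Z p q θ ω) θ := by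
    have h := (((Real.hasDerivAt_cos θ).ofReal_comp.mul_const (Z ω p))).add
      (((Real.hasDerivAt_sin θ).ofReal_comp.mul_const (Z ω q)))
    refine h.congr_deriv ?_
    unfold vF
    push_cast
    ring
  have hv : HasDerivAt (fun t => vF Z p q t ω) (-(wF Z p q θ ω)) θ := by
    have h := (((Real.hasDerivAt_cos θ).ofReal_comp.mul_const (Z ω q))).sub
      (((Real.hasDerivAt_sin θ).ofReal_comp.mul_const (Z ω p)))
    refine h.congr_deriv ?_
    unfold wF
    push_cast
    ring
  have hwb : HasDerivAt (fun t => wbF Z p q t ω) (vbF Z p q θ ω) θ := by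
    have h := (((Real.hasDerivAt_cos θ).ofReal_comp.mul_const (conj (Z ω p)))).add
      (((Real.hasDerivAt_sin θ).ofReal_comp.mul_const (conj (Z ω q))))
    refine h.congr_deriv ?_
    unfold vbF
    push_cast
    ring
  have hvb : HasDerivAt (fun t => vbF Z p q t ω) (-(wbF Z p q θ ω)) θ := by
    have h := (((Real.hasDerivAt_cos θ).ofReal_comp.mul_const (conj (Z ω q)))).sub
      (((Real.hasDerivAt_sin θ).ofReal_comp.mul_const (conj (Z ω p))))
    refine h.congr_deriv ?_
    unfold wbF
    push_cast
    ring
  have hS := (hv.mul hwb).add (hw.mul hvb)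
  have hP1 := (hasDerivAt_pow_comp hw A).mul (hasDerivAt_pow_comp hwb A)
  have hQ1 := (hasDerivAt_pow_comp hv B).mul (hasDerivAt_pow_comp hvb B)
  have h := (((hS.mul hP1).mul hQ1).mul_const (gfun a' a' (Z ω)))
  refine h.congr_deriv ?_
  unfold PsiF'
  simp only [Pi.mul_apply, Pi.add_apply]
  ring

end DerivDefs

section PsiProps
variable {n : ℕ} {Ω : Type*} [MeasurableSpace Ω] (P : Measure Ω) [IsProbabilityMeasure P]
  (Z : Ω → Fin n → ℂ)

lemma integrable_of_bound (f : Ω → ℂ) (C : ℝ) (hm : Measurable f) (hb : ∀ ω, ‖f ω‖ ≤ C) :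
    Integrable f P :=
  Integrable.mono' (integrable_const C) hm.aestronglyMeasurable (Filter.Eventually.of_forall hb)

variable (p q : Fin n) (a' : Fin n → ℕ) (A B : ℕ)

lemma meas_wvF (hZmeas : Measurable Z) (θ : ℝ) :
    Measurable (wF Z p q θ) ∧ Measurable (vF Z p q θ) ∧ Measurable (wbF Z p q θ)
      ∧ Measurable (vbF Z p q θ) := by
  have hp : Measurable fun ω => Z ω p := (measurable_pi_apply p).comp hZmeas
  have hq : Measurable fun ω => Z ω q := (measurable_pi_apply q).comp hZmeas
  have hpc : Measurable fun ω => conj (Z ω p) := Complex.continuous_conj.measurable.comp hp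
  have hqc : Measurable fun ω => conj (Z ω q) := Complex.continuous_conj.measurable.comp hq
  exact ⟨(hp.const_mul _).add (hq.const_mul _), (hq.const_mul _).sub (hp.const_mul _),
    (hpc.const_mul _).add (hqc.const_mul _), (hqc.const_mul _).sub (hpc.const_mul _)⟩

lemma meas_PsiF (hZmeas : Measurable Z) (θ : ℝ) : Measurable (PsiF Z p q a' A B θ) := by
  obtain ⟨h1, h2, h3, h4⟩ := meas_wvF Z p q hZmeas θ
  have hR : Measurable fun ω => gfun a' a' (Z ω) := (gfun_meas a' a').comp hZmeas
  exact ((((h2.mul h3).add (h1.mul h4)).mul ((h1.pow_const A).mul (h3.pow_const A))).mul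
    ((h2.pow_const B).mul (h4.pow_const B))).mul hR

lemma meas_PsiF' (hZmeas : Measurable Z) (θ : ℝ) : Measurable (PsiF' Z p q a' A B θ) := by
  obtain ⟨h1, h2, h3, h4⟩ := meas_wvF Z p q hZmeas θ
  have hR : Measurable fun ω => gfun a' a' (Z ω) := (gfun_meas a' a').comp hZmeas
  unfold PsiF'
  fun_prop

lemma nbd_mul {x y : ℂ} {a b : ℝ} (hx : ‖x‖ ≤ a) (hy : ‖y‖ ≤ b) (ha : 0 ≤ a) :
    ‖x * y‖ ≤ a * b := by
  rw [norm_mul]; exact mul_le_mul hx hy (norm_nonneg _) ha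

lemma nbd_add {x y : ℂ} {a b : ℝ} (hx : ‖x‖ ≤ a) (hy : ‖y‖ ≤ b) : ‖x + y‖ ≤ a + b :=
  (norm_add_le x y).trans (add_le_add hx hy)

lemma nbd_pow {x : ℂ} {a : ℝ} (hx : ‖x‖ ≤ a) (m : ℕ) : ‖x ^ m‖ ≤ a ^ m := by
  rw [norm_pow]
  exact pow_le_pow_left₀ (norm_nonneg _) hx m

lemma bd_wvF (hZsph : ∀ ω, ∑ j, Complex.normSq (Z ω j) = 1) (θ : ℝ) (ω : Ω) :
    ‖wF Z p q θ ω‖ ≤ 2 ∧ ‖vF Z p q θ ω‖ ≤ 2 ∧ ‖wbF Z p q θ ω‖ ≤ 2 ∧ ‖vbF Z p q θ ω‖ ≤ 2 := by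
  have hzp : ‖Z ω p‖ ≤ 1 := by exact zbdd Z hZsph ω p
  have hzq : ‖Z ω q‖ ≤ 1 := by exact zbdd Z hZsph ω q
  have hzpc : ‖conj (Z ω p)‖ ≤ 1 := by rwa [RCLike.norm_conj]
  have hzqc : ‖conj (Z ω q)‖ ≤ 1 := by rwa [RCLike.norm_conj]
  have hc : ‖((Real.cos θ : ℝ) : ℂ)‖ ≤ 1 := by
    rw [Complex.norm_real, Real.norm_eq_abs]; exact Real.abs_cos_le_one θ
  have hs : ‖((Real.sin θ : ℝ) : ℂ)‖ ≤ 1 := by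
    rw [Complex.norm_real, Real.norm_eq_abs]; exact Real.abs_sin_le_one θ
  refine ⟨?_, ?_, ?_, ?_⟩
  · calc ‖wF Z p q θ ω‖ ≤ 1 * 1 + 1 * 1 := nbd_add (nbd_mul hc hzp zero_le_one) (nbd_mul hs hzq zero_le_one)
      _ = 2 := by norm_num
  · calc ‖vF Z p q θ ω‖ ≤ ‖(Real.cos θ : ℂ) * Z ω q‖ + ‖(Real.sin θ : ℂ) * Z ω p‖ := norm_sub_le _ _
      _ ≤ 1 * 1 + 1 * 1 := add_le_add (nbd_mul hc hzq zero_le_one) (nbd_mul hs hzp zero_le_one)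
      _ = 2 := by norm_num
  · calc ‖wbF Z p q θ ω‖ ≤ 1 * 1 + 1 * 1 := nbd_add (nbd_mul hc hzpc zero_le_one) (nbd_mul hs hzqc zero_le_one)
      _ = 2 := by norm_num
  · calc ‖vbF Z p q θ ω‖ ≤ ‖(Real.cos θ : ℂ) * conj (Z ω q)‖ + ‖(Real.sin θ : ℂ) * conj (Z ω p)‖ := norm_sub_le _ _
      _ ≤ 1 * 1 + 1 * 1 := add_le_add (nbd_mul hc hzqc zero_le_one) (nbd_mul hs hzpc zero_le_one)
      _ = 2 := by norm_num

lemma bd_PsiF (hZsph : ∀ ω, ∑ j, Complex.normSq (Z ω j) = 1) (θ : ℝ) (ω : Ω) :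
    ‖PsiF Z p q a' A B θ ω‖ ≤ 8 * 4 ^ A * 4 ^ B := by
  obtain ⟨hw, hv, hwb, hvb⟩ := bd_wvF Z p q hZsph θ ω
  have hR : ‖gfun a' a' (Z ω)‖ ≤ 1 := by
    exact gfun_bdd a' a' (Z ω) (fun m => zbdd Z hZsph ω m)
  have h4A : ‖wF Z p q θ ω ^ A * wbF Z p q θ ω ^ A‖ ≤ 4 ^ A := by
    calc ‖_‖ ≤ (2:ℝ)^A * 2^A := nbd_mul (nbd_pow hw A) (nbd_pow hwb A) (by positivity)
      _ = 4 ^ A := by rw [← mul_pow]; norm_num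
  have h4B : ‖vF Z p q θ ω ^ B * vbF Z p q θ ω ^ B‖ ≤ 4 ^ B := by
    calc ‖_‖ ≤ (2:ℝ)^B * 2^B := nbd_mul (nbd_pow hv B) (nbd_pow hvb B) (by positivity)
      _ = 4 ^ B := by rw [← mul_pow]; norm_num
  have hS : ‖vF Z p q θ ω * wbF Z p q θ ω + wF Z p q θ ω * vbF Z p q θ ω‖ ≤ 8 := by
    calc ‖_‖ ≤ 2*2 + 2*2 := nbd_add (nbd_mul hv hwb (by norm_num)) (nbd_mul hw hvb (by norm_num))
      _ = 8 := by norm_num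
  unfold PsiF
  calc ‖_‖ ≤ ((8 * 4^A) * 4^B) * 1 :=
        nbd_mul (nbd_mul (nbd_mul hS h4A (by norm_num)) h4B (by positivity)) hR (by positivity)
    _ = 8 * 4^A * 4^B := by ring

lemma bd_PsiF' (hZsph : ∀ ω, ∑ j, Complex.normSq (Z ω j) = 1) (θ : ℝ) (ω : Ω) :
    ‖PsiF' Z p q a' A B θ ω‖ ≤ (16 + 32 * A + 32 * B) * 4 ^ A * 4 ^ B := by
  obtain ⟨hw, hv, hwb, hvb⟩ := bd_wvF Z p q hZsph θ ω
  have hR : ‖gfun a' a' (Z ω)‖ ≤ 1 := by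
    exact gfun_bdd a' a' (Z ω) (fun m => zbdd Z hZsph ω m)
  have hwn : ‖-(wF Z p q θ ω)‖ ≤ 2 := by rwa [norm_neg]
  have hwbn : ‖-(wbF Z p q θ ω)‖ ≤ 2 := by rwa [norm_neg]
  have h4A : ‖wF Z p q θ ω ^ A * wbF Z p q θ ω ^ A‖ ≤ 4 ^ A := by
    calc ‖_‖ ≤ (2:ℝ)^A * 2^A := nbd_mul (nbd_pow hw A) (nbd_pow hwb A) (by positivity)
      _ = 4 ^ A := by rw [← mul_pow]; norm_num
  have h4B : ‖vF Z p q θ ω ^ B * vbF Z p q θ ω ^ B‖ ≤ 4 ^ B := by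
    calc ‖_‖ ≤ (2:ℝ)^B * 2^B := nbd_mul (nbd_pow hv B) (nbd_pow hvb B) (by positivity)
      _ = 4 ^ B := by rw [← mul_pow]; norm_num
  have hS : ‖vF Z p q θ ω * wbF Z p q θ ω + wF Z p q θ ω * vbF Z p q θ ω‖ ≤ 8 := by
    calc ‖_‖ ≤ 2*2 + 2*2 := nbd_add (nbd_mul hv hwb (by norm_num)) (nbd_mul hw hvb (by norm_num))
      _ = 8 := by norm_num
  have hS1 : ‖(-(wF Z p q θ ω) * wbF Z p q θ ω + vF Z p q θ ω * vbF Z p q θ ω) +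
      (vF Z p q θ ω * vbF Z p q θ ω + wF Z p q θ ω * -(wbF Z p q θ ω))‖ ≤ 16 := by
    calc ‖_‖ ≤ (2*2 + 2*2) + (2*2 + 2*2) :=
          nbd_add (nbd_add (nbd_mul hwn hwb (by norm_num)) (nbd_mul hv hvb (by norm_num)))
            (nbd_add (nbd_mul hv hvb (by norm_num)) (nbd_mul hw hwbn (by norm_num)))
      _ = 16 := by norm_num
  have hA1 : (2:ℝ) ^ (A - 1) ≤ 2 ^ A := pow_le_pow_right₀ (by norm_num) (Nat.sub_le A 1)
  have hB1 : (2:ℝ) ^ (B - 1) ≤ 2 ^ B := pow_le_pow_right₀ (by norm_num) (Nat.sub_le B 1)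
  have hDP1 : ‖((A : ℂ) * wF Z p q θ ω ^ (A - 1) * vF Z p q θ ω) * wbF Z p q θ ω ^ A
      + wF Z p q θ ω ^ A * ((A : ℂ) * wbF Z p q θ ω ^ (A - 1) * vbF Z p q θ ω)‖
      ≤ 4 * A * 4 ^ A := by
    have hAc : ‖(A : ℂ)‖ ≤ (A : ℝ) := by rw [Complex.norm_natCast]
    have ht1 : ‖((A : ℂ) * wF Z p q θ ω ^ (A - 1) * vF Z p q θ ω) * wbF Z p q θ ω ^ A‖
        ≤ ((A * 2^A) * 2) * 2^A := by
      refine nbd_mul (nbd_mul (nbd_mul hAc ((nbd_pow hw (A-1)).trans hA1) (by positivity))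
        hv (by positivity)) (nbd_pow hwb A) (by positivity)
    have ht2 : ‖wF Z p q θ ω ^ A * ((A : ℂ) * wbF Z p q θ ω ^ (A - 1) * vbF Z p q θ ω)‖
        ≤ 2^A * ((A * 2^A) * 2) := by
      refine nbd_mul (nbd_pow hw A) (nbd_mul (nbd_mul hAc ((nbd_pow hwb (A-1)).trans hA1)
        (by positivity)) hvb (by positivity)) (by positivity)
    calc ‖_‖ ≤ ((A * 2^A) * 2) * 2^A + 2^A * ((A * 2^A) * 2) := nbd_add ht1 ht2
      _ = 4 * A * (2^A * 2^A) := by ring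
      _ = 4 * A * 4 ^ A := by rw [← mul_pow]; norm_num
  have hDQ1 : ‖((B : ℂ) * vF Z p q θ ω ^ (B - 1) * (-(wF Z p q θ ω))) * vbF Z p q θ ω ^ B
      + vF Z p q θ ω ^ B * ((B : ℂ) * vbF Z p q θ ω ^ (B - 1) * (-(wbF Z p q θ ω)))‖
      ≤ 4 * B * 4 ^ B := by
    have hBc : ‖(B : ℂ)‖ ≤ (B : ℝ) := by rw [Complex.norm_natCast]
    have ht1 : ‖((B : ℂ) * vF Z p q θ ω ^ (B - 1) * (-(wF Z p q θ ω))) * vbF Z p q θ ω ^ B‖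
        ≤ ((B * 2^B) * 2) * 2^B := by
      refine nbd_mul (nbd_mul (nbd_mul hBc ((nbd_pow hv (B-1)).trans hB1) (by positivity))
        hwn (by positivity)) (nbd_pow hvb B) (by positivity)
    have ht2 : ‖vF Z p q θ ω ^ B * ((B : ℂ) * vbF Z p q θ ω ^ (B - 1) * (-(wbF Z p q θ ω)))‖
        ≤ 2^B * ((B * 2^B) * 2) := by
      refine nbd_mul (nbd_pow hv B) (nbd_mul (nbd_mul hBc ((nbd_pow hvb (B-1)).trans hB1)
        (by positivity)) hwbn (by positivity)) (by positivity)
    calc ‖_‖ ≤ ((B * 2^B) * 2) * 2^B + 2^B * ((B * 2^B) * 2) := nbd_add ht1 ht2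
      _ = 4 * B * (2^B * 2^B) := by ring
      _ = 4 * B * 4 ^ B := by rw [← mul_pow]; norm_num
  unfold PsiF'
  have hT1 : ‖_‖ ≤ (16 * 4^A) * 4^B := nbd_mul (nbd_mul hS1 h4A (by norm_num)) h4B (by positivity)
  have hT2 : ‖_‖ ≤ (8 * (4 * A * 4^A)) * 4^B :=
    nbd_mul (nbd_mul hS hDP1 (by norm_num)) h4B (by positivity)
  have hT3 : ‖_‖ ≤ (8 * 4^A) * (4 * B * 4^B) :=
    nbd_mul (nbd_mul hS h4A (by norm_num)) hDQ1 (by positivity)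
  calc ‖_‖ ≤ (((16 * 4^A) * 4^B + (8 * (4 * A * 4^A)) * 4^B) + (8 * 4^A) * (4 * B * 4^B)) * 1 :=
        nbd_mul (nbd_add (nbd_add hT1 hT2) hT3) hR (by positivity)
    _ = (16 + 32 * A + 32 * B) * 4 ^ A * 4 ^ B := by ring

end PsiProps

section KL
variable {n : ℕ} {Ω : Type*} [MeasurableSpace Ω] (P : Measure Ω) [IsProbabilityMeasure P]
  (Z : Ω → Fin n → ℂ)

lemma Jmom_def (E F : Fin n → ℕ) : Jmom P Z E F = ∫ ω, gfun E F (Z ω) ∂P := rfl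

lemma rotM_mulVec_p {p q : Fin n} (hpq : p ≠ q) (c s : ℝ) (z : Fin n → ℂ) :
    (rotM p q c s).mulVec z p = (c : ℂ) * z p + (s : ℂ) * z q := by
  rw [rotM_mulVec p q hpq]; simp

lemma rotM_mulVec_q {p q : Fin n} (hpq : p ≠ q) (c s : ℝ) (z : Fin n → ℂ) :
    (rotM p q c s).mulVec z q = (c : ℂ) * z q - (s : ℂ) * z p := by
  rw [rotM_mulVec p q hpq]; simp [Ne.symm hpq]

lemma gfun_rot {p q : Fin n} (hpq : p ≠ q) {a' : Fin n → ℕ} (ha'p : a' p = 0) (ha'q : a' q = 0)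
    (c s : ℝ) (z : Fin n → ℂ) :
    gfun a' a' ((rotM p q c s).mulVec z) = gfun a' a' z := by
  rw [rotM_mulVec p q hpq]
  unfold gfun
  congr 1
  · apply Finset.prod_congr rfl
    intro m _
    rcases eq_or_ne m p with rfl | hmp
    · simp [ha'p]
    · rcases eq_or_ne m q with rfl | hmq
      · simp [ha'q]
      · simp [hmp, hmq]
  · apply Finset.prod_congr rfl
    intro m _
    rcases eq_or_ne m p with rfl | hmp
    · simp [ha'p]
    · rcases eq_or_ne m q with rfl | hmq
      · simp [ha'q]
      · simp [hmp, hmq]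

lemma KLrel (hZmeas : Measurable Z) (hZsph : ∀ ω, ∑ j, Complex.normSq (Z ω j) = 1)
    (hZunif : ∀ V ∈ Matrix.unitaryGroup (Fin n) ℂ,
      Measure.map (fun ω => Matrix.mulVec V (Z ω)) P = Measure.map Z P)
    {p q : Fin n} (hpq : p ≠ q)
    (a' : Fin n → ℕ) (ha'p : a' p = 0) (ha'q : a' q = 0) (A B : ℕ) :
    ((B : ℂ) + 1) * Jmom P Z (updPQ p q a' (A+1) B) (updPQ p q a' (A+1) B)
      = ((A : ℂ) + 1) * Jmom P Z (updPQ p q a' A (B+1)) (updPQ p q a' A (B+1)) := by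
  classical
  have hgm : Measurable (gfun a' a' : (Fin n → ℂ) → ℂ) := gfun_meas a' a'
  have hcm : Measurable (fun x : ℂ => (starRingEnd ℂ) x) := Complex.continuous_conj.measurable
  have hφmeas : Measurable (fun z : Fin n → ℂ => (z q * conj (z p) + z p * conj (z q)) *
      (z p ^ A * (conj (z p)) ^ A) * (z q ^ B * (conj (z q)) ^ B) * gfun a' a' z) := by
    fun_prop
  -- invariance: the expectation of PsiF is 0 for every θ
  have hconst : ∀ θ : ℝ, ∫ ω, PsiF Z p q a' A B θ ω ∂P = 0 := by
    intro θ
    have hunit := rotM_unitary p q hpq (Real.cos θ) (Real.sin θ) (Real.cos_sq_add_sin_sq θ)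
    have hinv := inv_int P Z hZmeas hZunif _ hunit _ hφmeas
    beta_reduce at hinv
    have hpt : ∀ ω, PsiF Z p q a' A B θ ω =
        ((rotM p q (Real.cos θ) (Real.sin θ)).mulVec (Z ω) q *
            conj ((rotM p q (Real.cos θ) (Real.sin θ)).mulVec (Z ω) p) +
          (rotM p q (Real.cos θ) (Real.sin θ)).mulVec (Z ω) p *
            conj ((rotM p q (Real.cos θ) (Real.sin θ)).mulVec (Z ω) q)) *
          ((rotM p q (Real.cos θ) (Real.sin θ)).mulVec (Z ω) p ^ A *
            (conj ((rotM p q (Real.cos θ) (Real.sin θ)).mulVec (Z ω) p)) ^ A) *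
          ((rotM p q (Real.cos θ) (Real.sin θ)).mulVec (Z ω) q ^ B *
            (conj ((rotM p q (Real.cos θ) (Real.sin θ)).mulVec (Z ω) q)) ^ B) *
          gfun a' a' ((rotM p q (Real.cos θ) (Real.sin θ)).mulVec (Z ω)) := by
      intro ω
      rw [rotM_mulVec_p hpq, rotM_mulVec_q hpq, gfun_rot hpq ha'p ha'q]
      unfold PsiF
      simp only [wbF_eq, vbF_eq]
      unfold wF vF
      ring
    have e1 : ∫ ω, PsiF Z p q a' A B θ ω ∂P
        = ∫ ω, ((rotM p q (Real.cos θ) (Real.sin θ)).mulVec (Z ω) q *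
            conj ((rotM p q (Real.cos θ) (Real.sin θ)).mulVec (Z ω) p) +
          (rotM p q (Real.cos θ) (Real.sin θ)).mulVec (Z ω) p *
            conj ((rotM p q (Real.cos θ) (Real.sin θ)).mulVec (Z ω) q)) *
          ((rotM p q (Real.cos θ) (Real.sin θ)).mulVec (Z ω) p ^ A *
            (conj ((rotM p q (Real.cos θ) (Real.sin θ)).mulVec (Z ω) p)) ^ A) *
          ((rotM p q (Real.cos θ) (Real.sin θ)).mulVec (Z ω) q ^ B *
            (conj ((rotM p q (Real.cos θ) (Real.sin θ)).mulVec (Z ω) q)) ^ B) *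
          gfun a' a' ((rotM p q (Real.cos θ) (Real.sin θ)).mulVec (Z ω)) ∂P :=
      integral_congr_ae (Filter.Eventually.of_forall hpt)
    rw [e1, hinv]
    have hsplit : ∀ ω, (Z ω q * conj (Z ω p) + Z ω p * conj (Z ω q)) *
        (Z ω p ^ A * (conj (Z ω p)) ^ A) * (Z ω q ^ B * (conj (Z ω q)) ^ B) * gfun a' a' (Z ω)
        = gfun (updPQ p q a' A (B+1)) (updPQ p q a' (A+1) B) (Z ω)
          + gfun (updPQ p q a' (A+1) B) (updPQ p q a' A (B+1)) (Z ω) := by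
      intro ω
      rw [gfun_updPQ hpq a' ha'p ha'q, gfun_updPQ hpq a' ha'p ha'q]
      ring
    rw [integral_congr_ae (Filter.Eventually.of_forall hsplit),
      integral_add (Jmom_int P Z hZmeas hZsph _ _) (Jmom_int P Z hZmeas hZsph _ _)]
    rw [← Jmom_def, ← Jmom_def]
    rw [Jmom_zero P Z hZmeas hZsph hZunif _ _ p (by rw [updPQ_p hpq, updPQ_p hpq]; omega),
      Jmom_zero P Z hZmeas hZsph hZunif _ _ p (by rw [updPQ_p hpq, updPQ_p hpq]; omega)]
    norm_num
  -- differentiate under the integral at 0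
  have hder := hasDerivAt_integral_of_dominated_loc_of_deriv_le (μ := P) (x₀ := (0:ℝ))
    (F := fun θ ω => PsiF Z p q a' A B θ ω) (F' := fun θ ω => PsiF' Z p q a' A B θ ω)
    (bound := fun _ => (16 + 32 * A + 32 * B) * 4 ^ A * 4 ^ B) (s := Metric.ball 0 1) (Metric.ball_mem_nhds 0 one_pos)
    (Filter.Eventually.of_forall fun θ => (meas_PsiF Z p q a' A B hZmeas θ).aestronglyMeasurable)
    (integrable_of_bound P _ _ (meas_PsiF Z p q a' A B hZmeas 0)
      (fun ω => bd_PsiF Z p q a' A B hZsph 0 ω))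
    ((meas_PsiF' Z p q a' A B hZmeas 0).aestronglyMeasurable)
    (Filter.Eventually.of_forall fun ω θ _ => bd_PsiF' Z p q a' A B hZsph θ ω)
    (integrable_const _)
    (Filter.Eventually.of_forall fun ω θ _ => hasDerivAt_PsiF Z p q a' A B θ ω)
  have hDz : ∫ ω, PsiF' Z p q a' A B 0 ω ∂P = 0 := by
    have h1 := hder.2
    rw [show (fun θ => ∫ ω, PsiF Z p q a' A B θ ω ∂P) = fun _ => (0:ℂ) from funext hconst] at h1
    exact h1.unique (hasDerivAt_const 0 0)
  -- evaluate PsiF' at θ = 0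
  have hw0 : ∀ ω, wF Z p q 0 ω = Z ω p := by intro ω; unfold wF; simp
  have hv0 : ∀ ω, vF Z p q 0 ω = Z ω q := by intro ω; unfold vF; simp
  have hwb0 : ∀ ω, wbF Z p q 0 ω = conj (Z ω p) := by intro ω; unfold wbF; simp
  have hvb0 : ∀ ω, vbF Z p q 0 ω = conj (Z ω q) := by intro ω; unfold vbF; simp
  have hpt0 : ∀ ω, PsiF' Z p q a' A B 0 ω =
      (2:ℂ) * gfun (updPQ p q a' A (B+1)) (updPQ p q a' A (B+1)) (Z ω)
    + (-2:ℂ) * gfun (updPQ p q a' (A+1) B) (updPQ p q a' (A+1) B) (Z ω)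
    + (A:ℂ) * gfun (updPQ p q a' (A-1) (B+2)) (updPQ p q a' (A+1) B) (Z ω)
    + (A:ℂ) * gfun (updPQ p q a' A (B+1)) (updPQ p q a' ((A-1)+1) (B+1)) (Z ω)
    + (A:ℂ) * gfun (updPQ p q a' ((A-1)+1) (B+1)) (updPQ p q a' A (B+1)) (Z ω)
    + (A:ℂ) * gfun (updPQ p q a' (A+1) B) (updPQ p q a' (A-1) (B+2)) (Z ω)
    + (-(B:ℂ)) * gfun (updPQ p q a' (A+1) ((B-1)+1)) (updPQ p q a' (A+1) B) (Z ω)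
    + (-(B:ℂ)) * gfun (updPQ p q a' (A+2) (B-1)) (updPQ p q a' A (B+1)) (Z ω)
    + (-(B:ℂ)) * gfun (updPQ p q a' A (B+1)) (updPQ p q a' (A+2) (B-1)) (Z ω)
    + (-(B:ℂ)) * gfun (updPQ p q a' (A+1) B) (updPQ p q a' (A+1) ((B-1)+1)) (Z ω) := by
    intro ω
    simp only [gfun_updPQ hpq a' ha'p ha'q]
    unfold PsiF'
    rw [hw0, hv0, hwb0, hvb0]
    ring
  -- integrate the pointwise identity
  have hi : ∀ (E F : Fin n → ℕ) (c : ℂ), Integrable (fun ω => c * gfun E F (Z ω)) P :=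
    fun E F c => (Jmom_int P Z hZmeas hZsph E F).const_mul c
  rw [integral_congr_ae (Filter.Eventually.of_forall hpt0)] at hDz
  set f1 : Ω → ℂ := fun ω => (2:ℂ) * gfun (updPQ p q a' A (B+1)) (updPQ p q a' A (B+1)) (Z ω) with hf1
  set f2 : Ω → ℂ := fun ω => (-2:ℂ) * gfun (updPQ p q a' (A+1) B) (updPQ p q a' (A+1) B) (Z ω) with hf2
  set f3 : Ω → ℂ := fun ω => (A:ℂ) * gfun (updPQ p q a' (A-1) (B+2)) (updPQ p q a' (A+1) B) (Z ω) with hf3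
  set f4 : Ω → ℂ := fun ω => (A:ℂ) * gfun (updPQ p q a' A (B+1)) (updPQ p q a' ((A-1)+1) (B+1)) (Z ω) with hf4
  set f5 : Ω → ℂ := fun ω => (A:ℂ) * gfun (updPQ p q a' ((A-1)+1) (B+1)) (updPQ p q a' A (B+1)) (Z ω) with hf5
  set f6 : Ω → ℂ := fun ω => (A:ℂ) * gfun (updPQ p q a' (A+1) B) (updPQ p q a' (A-1) (B+2)) (Z ω) with hf6
  set f7 : Ω → ℂ := fun ω => (-(B:ℂ)) * gfun (updPQ p q a' (A+1) ((B-1)+1)) (updPQ p q a' (A+1) B) (Z ω) with hf7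
  set f8 : Ω → ℂ := fun ω => (-(B:ℂ)) * gfun (updPQ p q a' (A+2) (B-1)) (updPQ p q a' A (B+1)) (Z ω) with hf8
  set f9 : Ω → ℂ := fun ω => (-(B:ℂ)) * gfun (updPQ p q a' A (B+1)) (updPQ p q a' (A+2) (B-1)) (Z ω) with hf9
  set f10 : Ω → ℂ := fun ω => (-(B:ℂ)) * gfun (updPQ p q a' (A+1) B) (updPQ p q a' (A+1) ((B-1)+1)) (Z ω) with hf10
  have i1 : Integrable f1 P := hi _ _ _
  have i2 : Integrable f2 P := hi _ _ _
  have i3 : Integrable f3 P := hi _ _ _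
  have i4 : Integrable f4 P := hi _ _ _
  have i5 : Integrable f5 P := hi _ _ _
  have i6 : Integrable f6 P := hi _ _ _
  have i7 : Integrable f7 P := hi _ _ _
  have i8 : Integrable f8 P := hi _ _ _
  have i9 : Integrable f9 P := hi _ _ _
  have i10 : Integrable f10 P := hi _ _ _
  have I2 : Integrable (fun ω => f1 ω + f2 ω) P := i1.add i2
  have I3 : Integrable (fun ω => f1 ω + f2 ω + f3 ω) P := I2.add i3
  have I4 : Integrable (fun ω => f1 ω + f2 ω + f3 ω + f4 ω) P := I3.add i4
  have I5 : Integrable (fun ω => f1 ω + f2 ω + f3 ω + f4 ω + f5 ω) P := I4.add i5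
  have I6 : Integrable (fun ω => f1 ω + f2 ω + f3 ω + f4 ω + f5 ω + f6 ω) P := I5.add i6
  have I7 : Integrable (fun ω => f1 ω + f2 ω + f3 ω + f4 ω + f5 ω + f6 ω + f7 ω) P := I6.add i7
  have I8 : Integrable (fun ω => f1 ω + f2 ω + f3 ω + f4 ω + f5 ω + f6 ω + f7 ω + f8 ω) P := I7.add i8
  have I9 : Integrable (fun ω => f1 ω + f2 ω + f3 ω + f4 ω + f5 ω + f6 ω + f7 ω + f8 ω + f9 ω) P := I8.add i9
  rw [integral_add I9 i10, integral_add I8 i9, integral_add I7 i8, integral_add I6 i7,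
    integral_add I5 i6, integral_add I4 i5, integral_add I3 i4, integral_add I2 i3,
    integral_add i1 i2] at hDz
  simp only [hf1, hf2, hf3, hf4, hf5, hf6, hf7, hf8, hf9, hf10] at hDz
  simp only [MeasureTheory.integral_const_mul] at hDz
  simp only [← Jmom_def] at hDz
  -- the unbalanced moments vanish
  rw [Jmom_zero P Z hZmeas hZsph hZunif (updPQ p q a' (A-1) (B+2)) (updPQ p q a' (A+1) B) p
      (by rw [updPQ_p hpq, updPQ_p hpq]; omega),
    Jmom_zero P Z hZmeas hZsph hZunif (updPQ p q a' (A+1) B) (updPQ p q a' (A-1) (B+2)) p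
      (by rw [updPQ_p hpq, updPQ_p hpq]; omega),
    Jmom_zero P Z hZmeas hZsph hZunif (updPQ p q a' (A+2) (B-1)) (updPQ p q a' A (B+1)) p
      (by rw [updPQ_p hpq, updPQ_p hpq]; omega),
    Jmom_zero P Z hZmeas hZsph hZunif (updPQ p q a' A (B+1)) (updPQ p q a' (A+2) (B-1)) p
      (by rw [updPQ_p hpq, updPQ_p hpq]; omega)] at hDz
  -- conclude by case analysis on A and B
  rcases A with _ | A0 <;> rcases B with _ | B0 <;>
    · norm_num at hDz ⊢
      push_cast at hDz ⊢
      linear_combination (-1/2 : ℂ) * hDz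
end KL

section Chain
variable {n : ℕ} {Ω : Type*} [MeasurableSpace Ω] (P : Measure Ω) [IsProbabilityMeasure P]
  (Z : Ω → Fin n → ℂ)

lemma KLinc (hZmeas : Measurable Z) (hZsph : ∀ ω, ∑ j, Complex.normSq (Z ω j) = 1)
    (hZunif : ∀ V ∈ Matrix.unitaryGroup (Fin n) ℂ,
      Measure.map (fun ω => Matrix.mulVec V (Z ω)) P = Measure.map Z P)
    {p q : Fin n} (hpq : p ≠ q) (f : Fin n → ℕ) :
    ((f q : ℂ) + 1) * Jmom P Z (incE p f) (incE p f)
      = ((f p : ℂ) + 1) * Jmom P Z (incE q f) (incE q f) := by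
  classical
  set a' : Fin n → ℕ := Function.update (Function.update f p 0) q 0 with ha'
  have ha'p : a' p = 0 := by
    rw [ha', Function.update_of_ne hpq, Function.update_self]
  have ha'q : a' q = 0 := by rw [ha', Function.update_self]
  have h1 : updPQ p q a' (f p + 1) (f q) = incE p f := by
    funext m
    simp only [updPQ, incE, ha', Function.update_apply]
    by_cases hq : m = q <;> by_cases hp : m = p <;> simp_all
  have h2 : updPQ p q a' (f p) (f q + 1) = incE q f := by
    funext m
    simp only [updPQ, incE, ha', Function.update_apply]
    by_cases hq : m = q <;> by_cases hp : m = p <;> simp_all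
  have := KLrel P Z hZmeas hZsph hZunif hpq a' ha'p ha'q (f p) (f q)
  rwa [h1, h2] at this

/-- concentrated exponent vector -/
def singleE {n : ℕ} (p₀ : Fin n) (t : ℕ) : Fin n → ℕ := fun m => if m = p₀ then t else 0

lemma sum_singleE {p₀ : Fin n} (t : ℕ) : ∑ m, singleE p₀ t m = t := by
  unfold singleE
  simp [Finset.sum_ite_eq']

lemma prod_fact_singleE {p₀ : Fin n} (t : ℕ) : (∏ m, (singleE p₀ t m)!) = t ! := by
  unfold singleE
  rw [show (∏ m, (if m = p₀ then t else 0)!) = ∏ m, (if m = p₀ then t ! else 1 : ℕ) by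
    apply Finset.prod_congr rfl; intro m _; split_ifs <;> simp]
  simp [Finset.prod_ite_eq']

lemma chain0 (hZmeas : Measurable Z) (hZsph : ∀ ω, ∑ j, Complex.normSq (Z ω j) = 1)
    (hZunif : ∀ V ∈ Matrix.unitaryGroup (Fin n) ℂ,
      Measure.map (fun ω => Matrix.mulVec V (Z ω)) P = Measure.map Z P)
    (p₀ : Fin n) :
    ∀ (d t : ℕ) (b : Fin n → ℕ), (∑ m, b m) = t → t - b p₀ ≤ d →
    Jmom P Z b b * (t ! : ℂ)
      = Jmom P Z (singleE p₀ t) (singleE p₀ t) * ∏ m, ((b m)! : ℂ) := by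
  classical
  intro d
  induction d with
  | zero =>
    intro t b hsum hd
    have hb0 : b p₀ = t := by
      have : b p₀ ≤ t := hsum ▸ Finset.single_le_sum (fun m _ => Nat.zero_le _) (Finset.mem_univ p₀)
      omega
    have hb : b = singleE p₀ t := by
      funext m
      rcases eq_or_ne m p₀ with rfl | hm
      · simp [singleE, hb0]
      · have hrest : ∑ m' ∈ Finset.univ.erase p₀, b m' = 0 := by
          have := Finset.add_sum_erase Finset.univ b (Finset.mem_univ p₀)
          omega
        have : b m = 0 := by
          have hm' : m ∈ Finset.univ.erase p₀ := Finset.mem_erase.mpr ⟨hm, Finset.mem_univ m⟩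
          exact (Finset.sum_eq_zero_iff.mp hrest) m hm'
        simp [singleE, hm, this]
    rw [hb, ← Nat.cast_prod, prod_fact_singleE]
  | succ d ih =>
    intro t b hsum hd
    by_cases hb0 : t - b p₀ = 0
    · exact ih t b hsum (by omega)
    · -- find a coordinate q0 ≠ p₀ with b q0 > 0
      have hrest : ∑ m ∈ Finset.univ.erase p₀, b m ≠ 0 := by
        have := Finset.add_sum_erase Finset.univ b (Finset.mem_univ p₀)
        have hle : b p₀ ≤ t := hsum ▸ Finset.single_le_sum (fun m _ => Nat.zero_le _) (Finset.mem_univ p₀)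
        omega
      obtain ⟨q0, hq0mem, hq0⟩ := Finset.exists_ne_zero_of_sum_ne_zero hrest
      have hq0p : q0 ≠ p₀ := (Finset.mem_erase.mp hq0mem).1
      set c : Fin n → ℕ := Function.update b q0 (b q0 - 1) with hc
      have hcq : incE q0 c = b := by
        funext m
        unfold incE
        rcases eq_or_ne m q0 with rfl | hm
        · rw [Function.update_self, hc, Function.update_self]; omega
        · rw [Function.update_of_ne hm, hc, Function.update_of_ne hm]
      have hcp : c p₀ = b p₀ := by rw [hc, Function.update_of_ne (Ne.symm hq0p)]
      have hcq0 : c q0 = b q0 - 1 := by rw [hc, Function.update_self]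
      -- apply KLinc with p := p₀, q := q0 at base c
      have hKL := KLinc P Z hZmeas hZsph hZunif (Ne.symm hq0p) c
      rw [hcq] at hKL
      -- b' := incE p₀ c
      set b' : Fin n → ℕ := incE p₀ c with hb'
      have hb'p : b' p₀ = b p₀ + 1 := by rw [hb', incE, Function.update_self, hcp]
      have hsum' : ∑ m, b' m = t := by
        have h1 : ∑ m, b' m = (∑ m, c m) + 1 := by
          rw [hb']
          unfold incE
          rw [Finset.sum_update_of_mem (Finset.mem_univ p₀),
            ← Finset.add_sum_erase Finset.univ c (Finset.mem_univ p₀), Finset.erase_eq]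
          ring
        have h2 : (∑ m, c m) + 1 = ∑ m, b m := by
          rw [hc, Finset.sum_update_of_mem (Finset.mem_univ q0),
            ← Finset.add_sum_erase Finset.univ b (Finset.mem_univ q0), Finset.erase_eq]
          omega
        rw [h1, h2, hsum]
      have hih := ih t b' hsum' (by omega)
      -- factorial bookkeeping : (b q0) * ∏ (b' m)! = (b p₀ + 1) * ∏ (b m)!
      have hfact : (b q0) * ∏ m, (b' m)! = (b p₀ + 1) * ∏ m, (b m)! := by
        have e1 : ∏ m, (b' m)! = (b' p₀)! * ∏ m ∈ Finset.univ.erase p₀, (b' m)! :=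
          (Finset.mul_prod_erase Finset.univ (fun m => (b' m)!) (Finset.mem_univ p₀)).symm
        have e2 : ∏ m ∈ Finset.univ.erase p₀, (b' m)!
            = (b' q0)! * ∏ m ∈ (Finset.univ.erase p₀).erase q0, (b' m)! :=
          (Finset.mul_prod_erase _ _ (Finset.mem_erase.mpr ⟨hq0p, Finset.mem_univ q0⟩)).symm
        have e3 : ∏ m, (b m)! = (b p₀)! * ∏ m ∈ Finset.univ.erase p₀, (b m)! :=
          (Finset.mul_prod_erase Finset.univ (fun m => (b m)!) (Finset.mem_univ p₀)).symm
        have e4 : ∏ m ∈ Finset.univ.erase p₀, (b m)!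
            = (b q0)! * ∏ m ∈ (Finset.univ.erase p₀).erase q0, (b m)! :=
          (Finset.mul_prod_erase _ _ (Finset.mem_erase.mpr ⟨hq0p, Finset.mem_univ q0⟩)).symm
        have e5 : ∏ m ∈ (Finset.univ.erase p₀).erase q0, (b' m)!
            = ∏ m ∈ (Finset.univ.erase p₀).erase q0, (b m)! := by
          apply Finset.prod_congr rfl
          intro m hm
          obtain ⟨hmq, hmp⟩ := Finset.mem_erase.mp hm
          have hmp' := (Finset.mem_erase.mp hmp).1
          rw [hb', incE, Function.update_of_ne hmp', hc, Function.update_of_ne hmq]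
        have hb'q0 : b' q0 = b q0 - 1 := by
          rw [hb', incE, Function.update_of_ne hq0p, hcq0]
        rw [e1, e2, e3, e4, e5, hb'p, hb'q0]
        have hfq : b q0 * ((b q0 - 1)!) = (b q0)! := by
          calc b q0 * (b q0 - 1)! = ((b q0 - 1) + 1) * (b q0 - 1)! := by congr 1; omega
            _ = (b q0)! := by rw [← Nat.factorial_succ]; congr 1; omega
        calc b q0 * ((b p₀ + 1)! * ((b q0 - 1)! * ∏ m ∈ (Finset.univ.erase p₀).erase q0, (b m)!))
            = (b p₀ + 1)! * ((b q0 * (b q0 - 1)!) * ∏ m ∈ (Finset.univ.erase p₀).erase q0, (b m)!) := by ring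
          _ = (b p₀ + 1) * ((b p₀)! * ((b q0)! * ∏ m ∈ (Finset.univ.erase p₀).erase q0, (b m)!)) := by
              rw [hfq, Nat.factorial_succ]; ring
      -- hKL : (c q0 + 1) * J b' = (c p₀ + 1) * J b  -- with c q0 + 1 = b q0
      have hcq1 : (c q0 : ℂ) + 1 = (b q0 : ℂ) := by
        rw [hcq0]
        norm_cast
        omega
      rw [hcq1, hcp] at hKL
      -- conclude
      have hcast : ((b q0 : ℂ)) * ∏ m, ((b' m)! : ℂ) = ((b p₀ : ℂ) + 1) * ∏ m, ((b m)! : ℂ) := by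
        exact_mod_cast congrArg (fun x : ℕ => (x : ℂ)) hfact
      have hne : ((b p₀ : ℂ) + 1) ≠ 0 := by
        have : (0:ℝ) < (b p₀ : ℝ) + 1 := by positivity
        intro h
        have := congrArg Complex.re h
        simp at this
        norm_cast at this
      apply mul_left_cancel₀ hne
      calc ((b p₀ : ℂ) + 1) * (Jmom P Z b b * (t ! : ℂ))
          = ((b q0 : ℂ) * Jmom P Z b' b') * (t ! : ℂ) := by
            linear_combination (-((t ! : ℕ) : ℂ)) * hKL
        _ = (b q0 : ℂ) * (Jmom P Z (singleE p₀ t) (singleE p₀ t) * ∏ m, ((b' m)! : ℂ)) := by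
            linear_combination ((b q0 : ℕ) : ℂ) * hih
        _ = Jmom P Z (singleE p₀ t) (singleE p₀ t) * (((b q0 : ℂ)) * ∏ m, ((b' m)! : ℂ)) := by ring
        _ = ((b p₀ : ℂ) + 1) * (Jmom P Z (singleE p₀ t) (singleE p₀ t) * ∏ m, ((b m)! : ℂ)) := by
            linear_combination Jmom P Z (singleE p₀ t) (singleE p₀ t) * hcast

end Chain

section Mform
variable {n : ℕ} {Ω : Type*} [MeasurableSpace Ω] (P : Measure Ω) [IsProbabilityMeasure P]
  (Z : Ω → Fin n → ℂ)

noncomputable def Pk (n k : ℕ) : ℂ := ∏ l ∈ Finset.range k, ((n : ℂ) + l)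

lemma Pk_ne (hn : 0 < n) (k : ℕ) : Pk n k ≠ 0 := by
  unfold Pk
  rw [Finset.prod_ne_zero_iff]
  intro l _
  have : ((n : ℂ) + l) = ((n + l : ℕ) : ℂ) := by push_cast; ring
  rw [this, Nat.cast_ne_zero]
  omega

lemma Pk_succ (k : ℕ) : Pk n (k + 1) = Pk n k * ((n : ℂ) + k) := Finset.prod_range_succ _ _

lemma factC_ne (m : ℕ) : ((m ! : ℕ) : ℂ) ≠ 0 := Nat.cast_ne_zero.mpr (Nat.factorial_ne_zero m)

lemma Jmom_zeroE : Jmom P Z (fun _ => 0) (fun _ => 0) = 1 := by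
  unfold Jmom gfun
  simp [integral_const]

lemma sum_incE (m : Fin n) (f : Fin n → ℕ) : ∑ r, incE m f r = (∑ r, f r) + 1 := by
  unfold incE
  rw [Finset.sum_update_of_mem (Finset.mem_univ m),
    ← Finset.add_sum_erase Finset.univ f (Finset.mem_univ m), Finset.erase_eq]
  ring

lemma Mform (hn : 0 < n) (hZmeas : Measurable Z)
    (hZsph : ∀ ω, ∑ j, Complex.normSq (Z ω j) = 1)
    (hZunif : ∀ V ∈ Matrix.unitaryGroup (Fin n) ℂ,
      Measure.map (fun ω => Matrix.mulVec V (Z ω)) P = Measure.map Z P) :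
    ∀ (k : ℕ) (b : Fin n → ℕ), (∑ m, b m) = k →
      Jmom P Z b b = (Pk n k)⁻¹ * ∏ m, ((b m)! : ℂ) := by
  intro k
  induction k with
  | zero =>
    intro b hsum
    have hb : b = fun _ => 0 := by
      funext m
      exact (Finset.sum_eq_zero_iff.mp hsum) m (Finset.mem_univ m)
    rw [hb, Jmom_zeroE]
    simp [Pk]
  | succ k ihk =>
    intro b hsum
    set p₀ : Fin n := ⟨0, hn⟩ with hp₀
    -- the value at the concentrated vector
    have hsingle : Jmom P Z (singleE p₀ (k+1)) (singleE p₀ (k+1))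
        = (Pk n (k+1))⁻¹ * (((k+1)! : ℕ) : ℂ) := by
      have ha₀ := ihk (singleE p₀ k) (sum_singleE k)
      rw [← Nat.cast_prod, prod_fact_singleE] at ha₀
      have hrec := Jmom_rec P Z hZmeas hZsph (singleE p₀ k)
      have hp0 : incE p₀ (singleE p₀ k) = singleE p₀ (k+1) := by
        funext m
        unfold incE singleE
        rw [Function.update_apply]
        by_cases hm : m = p₀ <;> simp [hm]
      have hterm : ∀ m, m ≠ p₀ →
          Jmom P Z (incE m (singleE p₀ k)) (incE m (singleE p₀ k)) * (((k+1)! : ℕ) : ℂ)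
          = Jmom P Z (singleE p₀ (k+1)) (singleE p₀ (k+1)) * ((k ! : ℕ) : ℂ) := by
        intro m hm
        have hs : ∑ r, incE m (singleE p₀ k) r = k + 1 := by
          rw [sum_incE, sum_singleE]
        have hch := chain0 P Z hZmeas hZsph hZunif p₀ (k+1) (k+1)
          (incE m (singleE p₀ k)) hs (Nat.sub_le _ _)
        have hprod : (∏ r, ((incE m (singleE p₀ k) r)! : ℕ)) = k ! := by
          have he : incE m (singleE p₀ k) = fun r => if r = m then 1 else singleE p₀ k r := by
            funext r
            unfold incE
            rw [Function.update_apply]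
            by_cases hr : r = m <;> simp [hr, singleE, hm]
          rw [he]
          rw [← Finset.mul_prod_erase Finset.univ _ (Finset.mem_univ m)]
          simp only [if_pos rfl, Nat.factorial_one, one_mul]
          have hp₀mem : p₀ ∈ Finset.univ.erase m := Finset.mem_erase.mpr ⟨Ne.symm hm, Finset.mem_univ _⟩
          rw [← Finset.mul_prod_erase _ _ hp₀mem]
          rw [if_neg (Ne.symm hm)]
          simp only [singleE, if_pos rfl]
          rw [show (∏ r ∈ (Finset.univ.erase m).erase p₀,
              (if r = m then 1 else if r = p₀ then k else 0)!) = 1 from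
            Finset.prod_eq_one (by
              intro r hr
              obtain ⟨hrp, hrm'⟩ := Finset.mem_erase.mp hr
              have hrm := (Finset.mem_erase.mp hrm').1
              simp [hrm, hrp])]
          simp
        calc Jmom P Z (incE m (singleE p₀ k)) (incE m (singleE p₀ k)) * (((k+1)! : ℕ) : ℂ)
            = Jmom P Z (singleE p₀ (k+1)) (singleE p₀ (k+1))
                * ∏ r, ((incE m (singleE p₀ k) r)! : ℂ) := hch
          _ = Jmom P Z (singleE p₀ (k+1)) (singleE p₀ (k+1)) * ((k ! : ℕ) : ℂ) := by
              rw [← Nat.cast_prod, hprod]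
      -- multiply the recursion by (k+1)!
      have key : Jmom P Z (singleE p₀ (k+1)) (singleE p₀ (k+1)) * ((k ! : ℕ) : ℂ) * ((n : ℂ) + k)
          = (Pk n k)⁻¹ * ((k ! : ℕ) : ℂ) * (((k+1)! : ℕ) : ℂ) := by
        have hsplit : (∑ m, Jmom P Z (incE m (singleE p₀ k)) (incE m (singleE p₀ k)))
              * (((k+1)! : ℕ) : ℂ)
            = Jmom P Z (singleE p₀ (k+1)) (singleE p₀ (k+1)) * (((k+1)! : ℕ) : ℂ)
              + ((n : ℂ) - 1) * (Jmom P Z (singleE p₀ (k+1)) (singleE p₀ (k+1)) * ((k ! : ℕ) : ℂ)) := by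
          rw [Finset.sum_mul, ← Finset.add_sum_erase Finset.univ _ (Finset.mem_univ p₀), hp0]
          congr 1
          rw [Finset.sum_congr rfl (fun m hm => hterm m (Finset.mem_erase.mp hm).1)]
          rw [Finset.sum_const, Finset.card_erase_of_mem (Finset.mem_univ p₀)]
          simp only [Finset.card_univ, Fintype.card_fin, nsmul_eq_mul]
          have : ((n - 1 : ℕ) : ℂ) = (n : ℂ) - 1 := by
            rw [Nat.cast_sub hn]; norm_num
          rw [this]
        rw [hrec, ha₀] at hsplit
        have hfs : (((k+1)! : ℕ) : ℂ) = ((k : ℂ) + 1) * ((k ! : ℕ) : ℂ) := by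
          rw [Nat.factorial_succ]; push_cast; ring
        linear_combination (-1 : ℂ) * hsplit
          - Jmom P Z (singleE p₀ (k+1)) (singleE p₀ (k+1)) * hfs
      -- solve for the value
      have h2 : Pk n k ≠ 0 := Pk_ne hn k
      have h3 : ((n : ℂ) + k) ≠ 0 := by
        have : ((n : ℂ) + k) = ((n + k : ℕ) : ℂ) := by push_cast; ring
        rw [this, Nat.cast_ne_zero]; omega
      have h4 := factC_ne k
      rw [Pk_succ]
      apply mul_right_cancel₀ (mul_ne_zero h4 h3)
      rw [show Jmom P Z (singleE p₀ (k+1)) (singleE p₀ (k+1)) * (((k ! : ℕ) : ℂ) * ((n:ℂ) + k))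
          = Jmom P Z (singleE p₀ (k+1)) (singleE p₀ (k+1)) * ((k ! : ℕ) : ℂ) * ((n:ℂ) + k) by ring,
        key]
      field_simp
    -- now the general case
    have hch := chain0 P Z hZmeas hZsph hZunif p₀ (k+1) (k+1) b hsum (Nat.sub_le _ _)
    rw [hsingle] at hch
    have h5 := factC_ne (k+1)
    apply mul_right_cancel₀ h5
    rw [hch]
    ring

end Mform

section Count
variable {k n : ℕ}

/-- number of indices mapping to m -/
def cnt (i : Fin k → Fin n) (m : Fin n) : ℕ := (Finset.univ.filter fun l => i l = m).card

lemma prod_comp_cnt (i : Fin k → Fin n) (g : Fin n → ℂ) :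
    ∏ l, g (i l) = ∏ m, g m ^ cnt i m := by
  rw [← Finset.prod_fiberwise Finset.univ i (fun l => g (i l))]
  apply Finset.prod_congr rfl
  intro m _
  rw [show (∏ l ∈ Finset.univ.filter fun l => i l = m, g (i l))
      = ∏ l ∈ Finset.univ.filter fun l => i l = m, g m from
    Finset.prod_congr rfl (fun l hl => by rw [(Finset.mem_filter.mp hl).2])]
  rw [Finset.prod_const]
  rfl

lemma sum_cnt (i : Fin k → Fin n) : ∑ m, cnt i m = k := by
  unfold cnt
  rw [← Finset.card_eq_sum_card_fiberwise (f := i) (t := Finset.univ)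
    (fun l _ => Finset.mem_univ (i l))]
  simp

lemma cnt_eq_of_perm (i j : Fin k → Fin n) (π : Equiv.Perm (Fin k))
    (h : ∀ l, i l = j (π l)) (m : Fin n) : cnt i m = cnt j m := by
  unfold cnt
  apply Finset.card_bij' (fun l _ => π l) (fun l _ => π.symm l)
  · intro l hl
    rw [Finset.mem_filter] at hl ⊢
    exact ⟨Finset.mem_univ _, by rw [← h l]; exact hl.2⟩
  · intro l hl
    rw [Finset.mem_filter] at hl ⊢
    refine ⟨Finset.mem_univ _, ?_⟩
    rw [h (π.symm l), Equiv.apply_symm_apply]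
    exact hl.2
  · intro l _; exact π.symm_apply_apply l
  · intro l _; exact π.apply_symm_apply l

lemma perm_count (i j : Fin k → Fin n) (h : ∀ m, cnt i m = cnt j m) :
    (Finset.univ.filter fun π : Equiv.Perm (Fin k) => ∀ l, i l = j (π l)).card
      = ∏ m, (cnt j m)! := by
  classical
  have hcard : (Finset.univ.filter fun π : Equiv.Perm (Fin k) => ∀ l, i l = j (π l)).card
      = Fintype.card {π : Equiv.Perm (Fin k) // ∀ l, i l = j (π l)} := by
    rw [Fintype.card_subtype]
  have congr_app : ∀ (e : ∀ m : Fin n, {l // i l = m} ≃ {l // j l = m}) (m m' : Fin n)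
      (_ : m = m') (x : Fin k) (hx : i x = m) (hx' : i x = m'),
      ((e m) ⟨x, hx⟩).1 = ((e m') ⟨x, hx'⟩).1 := by
    rintro e m m' rfl x hx hx'; rfl
  have congr_symm : ∀ (e : ∀ m : Fin n, {l // i l = m} ≃ {l // j l = m}) (m m' : Fin n)
      (_ : m = m') (x : Fin k) (hx : j x = m) (hx' : j x = m'),
      ((e m).symm ⟨x, hx⟩).1 = ((e m').symm ⟨x, hx'⟩).1 := by
    rintro e m m' rfl x hx hx'; rfl
  have E : {π : Equiv.Perm (Fin k) // ∀ l, i l = j (π l)}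
      ≃ (∀ m : Fin n, {l // i l = m} ≃ {l // j l = m}) := by
    refine
      { toFun := fun π m =>
          { toFun := fun x => ⟨π.1 x.1, by rw [← π.2 x.1]; exact x.2⟩
            invFun := fun y => ⟨π.1.symm y.1, by
              have h2 := π.2 (π.1.symm y.1)
              rw [Equiv.apply_symm_apply] at h2
              rw [h2]; exact y.2⟩
            left_inv := fun x => Subtype.ext (π.1.symm_apply_apply x.1)
            right_inv := fun y => Subtype.ext (π.1.apply_symm_apply y.1) }
        invFun := fun e =>
          ⟨{ toFun := fun l => ((e (i l)) ⟨l, rfl⟩).1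
             invFun := fun l => ((e (j l)).symm ⟨l, rfl⟩).1
             left_inv := fun l => ?_
             right_inv := fun l => ?_ },
           fun l => (((e (i l)) ⟨l, rfl⟩).2).symm⟩
        left_inv := fun π => Subtype.ext (Equiv.ext fun l => rfl)
        right_inv := fun e => ?_ }
    · beta_reduce
      have hy := ((e (i l)) ⟨l, rfl⟩).2
      rw [congr_symm e (j ((e (i l)) ⟨l, rfl⟩).1) (i l) hy ((e (i l)) ⟨l, rfl⟩).1 rfl hy]
      rw [show (⟨((e (i l)) ⟨l, rfl⟩).1, hy⟩ : {l' // j l' = i l}) = (e (i l)) ⟨l, rfl⟩ from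
        Subtype.ext rfl]
      rw [Equiv.symm_apply_apply]
    · beta_reduce
      have hy := ((e (j l)).symm ⟨l, rfl⟩).2
      rw [congr_app e (i ((e (j l)).symm ⟨l, rfl⟩).1) (j l) hy ((e (j l)).symm ⟨l, rfl⟩).1 rfl hy]
      rw [show (⟨((e (j l)).symm ⟨l, rfl⟩).1, hy⟩ : {l' // i l' = j l}) = (e (j l)).symm ⟨l, rfl⟩ from
        Subtype.ext rfl]
      rw [Equiv.apply_symm_apply]
    · funext m
      apply Equiv.ext
      intro x
      apply Subtype.ext
      obtain ⟨l, hl⟩ := x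
      exact congr_app e (i l) m hl l rfl hl
  rw [hcard, Fintype.card_congr E, Fintype.card_pi]
  apply Finset.prod_congr rfl
  intro m _
  have h1 : Fintype.card {l // i l = m} = cnt i m := Fintype.card_subtype _
  have h2 : Fintype.card {l // j l = m} = cnt j m := Fintype.card_subtype _
  rw [Fintype.card_equiv (Fintype.equivOfCardEq (by rw [h1, h2, h m])), h1, h m]

end Count

theorem stmt17 {n : ℕ}
    {Ω : Type*} [MeasurableSpace Ω] (P : Measure Ω) [IsProbabilityMeasure P]
    (Z : Ω → Fin n → ℂ) (hZmeas : Measurable Z)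
    -- Z takes values in the unit sphere of ℂⁿ:
    (hZsph : ∀ ω, ∑ j, Complex.normSq (Z ω j) = 1)
    -- the law of Z is invariant under the unitary group (uniform on the sphere):
    (hZunif : ∀ V ∈ Matrix.unitaryGroup (Fin n) ℂ,
      Measure.map (fun ω => Matrix.mulVec V (Z ω)) P = Measure.map Z P) :
    -- unbalanced moments vanish:
    (∀ p q : ℕ, p ≠ q → ∀ (i : Fin p → Fin n) (j : Fin q → Fin n),
      (∫ ω, (∏ l, Z ω (i l)) * ∏ l, conj (Z ω (j l)) ∂P) = 0) ∧
    -- balanced moments are given by a sum over permutations: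
    ∀ k : ℕ, 1 ≤ k → ∀ i j : Fin k → Fin n,
      (∫ ω, (∏ l, Z ω (i l)) * ∏ l, conj (Z ω (j l)) ∂P) =
        (∏ l : Fin k, ((n : ℂ) + (l : ℕ)))⁻¹ *
          ∑ π : Equiv.Perm (Fin k), ∏ l, if i l = j (π l) then (1 : ℂ) else 0 := by
  classical
  have hn : 0 < n := by
    by_contra hn0
    push_neg at hn0
    have hn' : n = 0 := by omega
    subst hn'
    by_cases hE : Nonempty Ω
    · obtain ⟨ω⟩ := hE
      have := hZsph ω
      simp at this
    · have h1 : (Set.univ : Set Ω) = ∅ := Set.univ_eq_empty_iff.mpr (not_nonempty_iff.mp hE)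
      have h2 : P Set.univ = 1 := measure_univ
      rw [h1] at h2
      simp at h2
  have hptgen : ∀ (k k' : ℕ) (i : Fin k → Fin n) (j : Fin k' → Fin n) (ω : Ω),
      (∏ l, Z ω (i l)) * ∏ l, conj (Z ω (j l)) = gfun (cnt i) (cnt j) (Z ω) := by
    intro k k' i j ω
    unfold gfun
    rw [prod_comp_cnt i (fun m => Z ω m), prod_comp_cnt j (fun m => conj (Z ω m))]
  constructor
  · intro p q hpq i j
    rw [integral_congr_ae (Filter.Eventually.of_forall (hptgen p q i j))]
    have hex : ∃ m, cnt i m ≠ cnt j m := by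
      by_contra hc
      push_neg at hc
      apply hpq
      have h1 := sum_cnt i
      have h2 := sum_cnt j
      have h3 : ∑ m, cnt i m = ∑ m, cnt j m := Finset.sum_congr rfl (fun m _ => hc m)
      omega
    obtain ⟨m₀, hm₀⟩ := hex
    exact Jmom_zero P Z hZmeas hZsph hZunif (cnt i) (cnt j) m₀ hm₀
  · intro k _ i j
    rw [integral_congr_ae (Filter.Eventually.of_forall (hptgen k k i j)), ← Jmom_def P Z]
    have hsum : (∑ π : Equiv.Perm (Fin k), ∏ l, if i l = j (π l) then (1:ℂ) else 0)
        = (((Finset.univ.filter fun π : Equiv.Perm (Fin k) => ∀ l, i l = j (π l)).card : ℕ) : ℂ) := by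
      calc (∑ π : Equiv.Perm (Fin k), ∏ l, if i l = j (π l) then (1:ℂ) else 0)
          = ∑ π : Equiv.Perm (Fin k), if ∀ l, i l = j (π l) then (1:ℂ) else 0 := by
            apply Finset.sum_congr rfl
            intro π _
            rw [Finset.prod_boole]
            simp
        _ = _ := Finset.sum_boole _ _
    by_cases hc : ∀ m, cnt i m = cnt j m
    · have hcf : cnt j = cnt i := funext fun m => (hc m).symm
      rw [hcf, Mform P Z hn hZmeas hZsph hZunif k (cnt i) (sum_cnt i), hsum,
        perm_count i j hc]
      have hPk : (∏ l : Fin k, ((n : ℂ) + (l : ℕ))) = Pk n k := by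
        rw [Pk]
        exact Fin.prod_univ_eq_prod_range (fun l => (n:ℂ) + l) k
      rw [hPk]
      congr 1
      rw [Nat.cast_prod]
      exact Finset.prod_congr rfl (fun m _ => by rw [hc m])
    · push_neg at hc
      obtain ⟨m₀, hm₀⟩ := hc
      rw [Jmom_zero P Z hZmeas hZsph hZunif (cnt i) (cnt j) m₀ hm₀, hsum]
      have hempty : (Finset.univ.filter fun π : Equiv.Perm (Fin k) => ∀ l, i l = j (π l)) = ∅ := by
        rw [Finset.filter_eq_empty_iff]
        intro π _ hπ
        exact hm₀ (cnt_eq_of_perm i j π hπ m₀)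
      rw [hempty]
      simp
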